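/- Let T be an E0-large tree and σ ∈ 2^{<ω}. Then either σ·T = T or the intersection T ∩ (σ·T) is finite. -/

import Mathlib

namespace E0L

/-- Finite binary strings `2^{<ω}`. -/
abbrev Str : Type := List Bool

/-- Sets of binary strings (in particular, trees). -/
abbrev Tr : Type := Set Str

/-- The action `s·t` of a string on a string:
`(s·t)(k) = t(k) + s(k) mod 2` for `k < min(|s|,|t|)` and `(s·t)(k) = t(k)` otherwise. -/
def act (s t : Str) : Str := List.ofFn fun k : Fin t.length => Bool.xor (s.getD k false) (t.get k)

/-- The action `s·T` of a string on a set of strings. -/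
def actT (s : Str) (T : Tr) : Tr := (act s) '' T

/-- `T ↾ s = {t ∈ T : s ⊆ t or t ⊆ s}`. -/
def restr (T : Tr) (s : Str) : Tr := {t ∈ T | s <+: t ∨ t <+: s}

/-- `[T]`, the set of infinite branches of `T` (as elements of Cantor space `2^ω`). -/
def branches (T : Tr) : Set (ℕ → Bool) := {x | ∀ n : ℕ, (List.ofFn fun k : Fin n => x k) ∈ T}

/-- `T[s] = {t : s ⊆ t or t ⊂ s}`. -/
def Tbr (s : Str) : Tr := {t | s <+: t ∨ (t <+: s ∧ t ≠ s)}

/-- `LTwit T r q` : the strings `q i n` witness that `T` is an E0-large tree with stem `r`: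
`|q^0_n| = |q^1_n| ≥ 1`, `q^i_n(0) = i`, and `T` consists of all initial segments of strings
of the form `r⌢q^{i(0)}_0⌢…⌢q^{i(n)}_n`. -/
def LTwit (T : Tr) (r : Str) (q : ℕ → Bool → Str) : Prop :=
  (∀ n : ℕ, (q n true).length = (q n false).length ∧ 1 ≤ (q n false).length) ∧
  (∀ n : ℕ, ∀ i : Bool, (q n i).head? = some i) ∧
  T = {t | ∃ n : ℕ, ∃ f : ℕ → Bool,
        t <+: r ++ ((List.range (n+1)).map (fun k => q k (f k))).flatten}

/-- `T` is an E0-large tree (`T ∈ LT`). -/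
def IsLT (T : Tr) : Prop := ∃ r q, LTwit T r q

/-- `stem T` : the longest `s ∈ T` with `T = T↾s`. -/
noncomputable def stem (T : Tr) : Str :=
  Classical.epsilon fun s => s ∈ T ∧ restr T s = T ∧ ∀ t ∈ T, restr T t = T → t.length ≤ s.length

/-- The canonical witness `(r, q)` of an E0-large tree. -/
noncomputable def witness (T : Tr) : Str × (ℕ → Bool → Str) :=
  Classical.epsilon fun rq => LTwit T rq.1 rq.2

/-- Splitting levels computed from a witness: `spl_0 = |r|`, `spl_{n+1} = spl_n + |q^i_n|`. -/
def splN (r : Str) (q : ℕ → Bool → Str) : ℕ → ℕ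
  | 0 => r.length
  | n+1 => splN r q n + (q n false).length

/-- `spl T n`, the `n`-th splitting level of an E0-large tree `T`. -/
noncomputable def spl (T : Tr) (n : ℕ) : ℕ := splN (witness T).1 (witness T).2 n

/-- Simple splitting `T→i = T↾(stem(T)⌢i)`. -/
noncomputable def split1 (T : Tr) (i : Bool) : Tr := restr T (stem T ++ [i])

/-- Iterated splitting `T→s`: `T→Λ = T`, `T→(s⌢i) = (T→s)→i`. -/
noncomputable def splitS (T : Tr) (s : Str) : Tr := s.foldl split1 T

/-- `S ⊆_n T` : `S ⊆ T` and `spl_k(S) = spl_k(T)` for all `k < n`. -/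
def subN (n : ℕ) (S T : Tr) : Prop := S ⊆ T ∧ ∀ k < n, spl S k = spl T k

/-- A large-tree forcing notion: a set of E0-large trees closed under restriction
and under the action of strings. -/
def IsLTF (P : Set Tr) : Prop :=
  (∀ T ∈ P, IsLT T) ∧
  (∀ T ∈ P, ∀ u ∈ T, restr T u ∈ P) ∧
  (∀ T ∈ P, ∀ s : Str, actT s T ∈ P)

/-- `T` is an `n`-collage over `P`: `T ∈ LT` and `T→s ∈ P` for all `s ∈ 2^n`. -/
def IsCollage (P : Set Tr) (n : ℕ) (T : Tr) : Prop :=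
  IsLT T ∧ ∀ s : Str, s.length = n → splitS T s ∈ P

/-- `D` is open dense in `P` (as a set of trees). -/
def OpenDense1 (P D : Set Tr) : Prop :=
  D ⊆ P ∧ (∀ S ∈ P, ∃ T ∈ D, T ⊆ S) ∧ (∀ S ∈ P, ∀ T ∈ D, S ⊆ T → S ∈ D)

/-- `⟨T,T'⟩` is a condition of the conditional product `P ×_{E0} P`. -/
def CondPair (P : Set Tr) (p : Tr × Tr) : Prop :=
  p.1 ∈ P ∧ p.2 ∈ P ∧ ∃ s : Str, actT s p.1 = p.2

/-- Componentwise order on pairs of trees: `p ≤ q`. -/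
def pleq (p q : Tr × Tr) : Prop := p.1 ⊆ q.1 ∧ p.2 ⊆ q.2

/-- Compatibility of two conditions in `P ×_{E0} P`. -/
def Compat (P : Set Tr) (p q : Tr × Tr) : Prop :=
  ∃ r : Tr × Tr, CondPair P r ∧ pleq r p ∧ pleq r q

/-- `D` is pre-dense in `P ×_{E0} P`. -/
def PreDense2 (P : Set Tr) (D : Set (Tr × Tr)) : Prop :=
  ∀ p : Tr × Tr, CondPair P p → ∃ q ∈ D, Compat P p q

/-- `D` is open dense in `P ×_{E0} P`. -/
def OpenDense2 (P : Set Tr) (D : Set (Tr × Tr)) : Prop :=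
  D ⊆ {p | CondPair P p} ∧
  (∀ p : Tr × Tr, CondPair P p → ∃ q ∈ D, pleq q p) ∧
  (∀ p : Tr × Tr, CondPair P p → ∀ q ∈ D, pleq p q → p ∈ D)

/-- A `P ×_{E0} P`-real name `c = ⟨C_n^i⟩`. -/
def IsRealName (P : Set Tr) (c : ℕ → Bool → Set (Tr × Tr)) : Prop :=
  (∀ n : ℕ, ∀ i : Bool, c n i ⊆ {p | CondPair P p}) ∧
  (∀ n : ℕ, PreDense2 P (c n false ∪ c n true)) ∧
  (∀ n : ℕ, ∀ p ∈ c n false, ∀ q ∈ c n true, ¬ Compat P p q)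

/-- `p` directly forces `c(n) = i`. -/
def DFVal (c : ℕ → Bool → Set (Tr × Tr)) (p : Tr × Tr) (n : ℕ) (i : Bool) : Prop :=
  ∃ q ∈ c n i, pleq p q

/-- `p` directly forces `s ⊂ c`. -/
def DFPrefix (c : ℕ → Bool → Set (Tr × Tr)) (p : Tr × Tr) (s : Str) : Prop :=
  ∀ n < s.length, DFVal c p n (s.getD n false)

/-- `p` directly forces `c ∉ [U]`. -/
def DFAvoid (c : ℕ → Bool → Set (Tr × Tr)) (p : Tr × Tr) (U : Tr) : Prop :=
  ∃ s : Str, s ∉ U ∧ DFPrefix c p s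

/-- `p` directly forces `c ≠ d`: there are incomparable strings `s, t` such that
`p` directly forces `s ⊂ c` and `t ⊂ d`. -/
def DFNe (c d : ℕ → Bool → Set (Tr × Tr)) (p : Tr × Tr) : Prop :=
  ∃ s t : Str, ¬ s <+: t ∧ ¬ t <+: s ∧ DFPrefix c p s ∧ DFPrefix d p t

/-- The action `σ·c` of a string on a real name. -/
def actName (σ : Str) (c : ℕ → Bool → Set (Tr × Tr)) : ℕ → Bool → Set (Tr × Tr) :=
  fun n i => if σ.getD n false = true then c n (!i) else c n i

/-- The name `π_left` of the left generic real. -/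
def piLeft : ℕ → Bool → Set (Tr × Tr) := fun n i =>
  {p | ∃ s t : Str, s.length = n+1 ∧ t.length = n+1 ∧ s.getD n false = i ∧ p = (Tbr s, Tbr t)}

/-- The name `π_right` of the right generic real. -/
def piRight : ℕ → Bool → Set (Tr × Tr) := fun n i =>
  {p | ∃ s t : Str, s.length = n+1 ∧ t.length = n+1 ∧ t.getD n false = i ∧ p = (Tbr s, Tbr t)}


-- Auxiliary development

lemma length_act (s t : Str) : (act s t).length = t.length := by simp [act]

lemma getElem_act (s t : Str) (k : ℕ) (hk : k < t.length) :
    (act s t)[k]'(by simpa [length_act] using hk) = Bool.xor (s.getD k false) (t[k]) := by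
  simp [act, List.getElem_ofFn]

lemma act_congr (s s' t : Str) (h : ∀ k, k < t.length → s.getD k false = s'.getD k false) :
    act s t = act s' t := by
  unfold act
  exact congrArg List.ofFn (funext fun k => by rw [h k k.isLt])

lemma act_nil (t : Str) : act [] t = t := by
  unfold act
  simpa using List.ofFn_getElem t

lemma act_act (s t : Str) : act s (act s t) = t := by
  apply List.ext_getElem (by simp [length_act])
  intro k h1 h2
  rw [getElem_act s _ k (by simpa [length_act] using h2), getElem_act s t k h2]
  cases s.getD k false <;> simp

lemma act_take (s t : Str) (m : ℕ) : act s (t.take m) = (act s t).take m := by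
  apply List.ext_getElem (by simp [length_act])
  intro k h1 h2
  have hk : k < (t.take m).length := by simpa [length_act] using h1
  rw [getElem_act s _ k hk, List.getElem_take,
    List.getElem_take (h := h2), getElem_act s t k (by simp at hk; omega)]

lemma act_prefix (s t u : Str) (h : t <+: u) : act s t <+: act s u := by
  have ht : t = u.take t.length := List.prefix_iff_eq_take.1 h
  rw [ht, act_take]
  exact List.take_prefix _ _

lemma act_append (s1 s2 t1 t2 : Str) (h : s1.length = t1.length) :
    act (s1 ++ s2) (t1 ++ t2) = act s1 t1 ++ act s2 t2 := by
  apply List.ext_getElem (by simp [length_act])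
  intro k h1 h2
  have hk : k < t1.length + t2.length := by simpa [length_act] using h1
  rw [getElem_act _ _ k (by simpa using hk)]
  by_cases hlt : k < t1.length
  · rw [List.getElem_append_left (by simpa using hlt),
      List.getElem_append_left (by simpa [length_act] using hlt),
      getElem_act s1 t1 k hlt, List.getD_append _ _ _ _ (by omega)]
  · rw [List.getElem_append_right (by simpa using hlt : t1.length ≤ k),
      List.getElem_append_right (by simp [length_act]; omega),
      List.getD_append_right _ _ _ _ (by omega)]
    simp only [length_act]
    rw [getElem_act s2 t2 (k - t1.length) (by omega), h]

lemma act_zipWith_xor (u v : Str) (h : u.length = v.length) :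
    act (List.zipWith Bool.xor u v) u = v := by
  apply List.ext_getElem (by simp [length_act, h])
  intro k h1 h2
  have hk : k < u.length := by simpa [length_act] using h1
  rw [getElem_act _ _ k hk,
    List.getD_eq_getElem _ _ (by simp [List.length_zipWith]; omega), List.getElem_zipWith]
  cases u[k] <;> cases v[k] <;> rfl

lemma zip_swap (u v : Str) : List.zipWith Bool.xor u v = List.zipWith Bool.xor v u := by
  apply List.ext_getElem (by simp [Nat.min_comm])
  intro k h1 h2
  simp only [List.getElem_zipWith]
  exact Bool.xor_comm _ _

lemma zip_self (u v : Str) (h : u.length = v.length) :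
    List.zipWith Bool.xor u u = List.zipWith Bool.xor v v := by
  apply List.ext_getElem (by simp [h])
  intro k h1 h2
  simp [List.getElem_zipWith]

lemma block_eq (p : Bool → Str) (hl : (p true).length = (p false).length)
    (a b c d : Bool) (h : Bool.xor a b = Bool.xor c d) :
    List.zipWith Bool.xor (p a) (p b) = List.zipWith Bool.xor (p c) (p d) := by
  have hle : ∀ x y : Bool, (p x).length = (p y).length := by
    intro x y; cases x <;> cases y <;> simp [hl]
  cases a <;> cases b <;> cases c <;> cases d <;> simp_all <;>
    first
      | rfl
      | exact zip_swap _ _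
      | exact zip_self _ _ (hle _ _)


def BL (q : ℕ → Bool → Str) (h : ℕ → Bool) (a M : ℕ) : Str :=
  ((List.range' a M).map fun k => q k (h k)).flatten

def B (r : Str) (q : ℕ → Bool → Str) (h : ℕ → Bool) (M : ℕ) : Str := r ++ BL q h 0 M

def DL (q : ℕ → Bool → Str) (f g : ℕ → Bool) (a M : ℕ) : Str :=
  ((List.range' a M).map fun k => List.zipWith Bool.xor (q k (f k)) (q k (g k))).flatten

variable {q : ℕ → Bool → Str} {r : Str}

lemma BL_zero (h : ℕ → Bool) (a : ℕ) : BL q h a 0 = [] := rfl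

lemma BL_succ (h : ℕ → Bool) (a M : ℕ) :
    BL q h a (M + 1) = q a (h a) ++ BL q h (a + 1) M := by
  simp [BL, List.range'_succ]

lemma DL_succ (f g : ℕ → Bool) (a M : ℕ) :
    DL q f g a (M + 1) = List.zipWith Bool.xor (q a (f a)) (q a (g a)) ++ DL q f g (a + 1) M := by
  simp [DL, List.range'_succ]

lemma BL_add (h : ℕ → Bool) (a m n : ℕ) :
    BL q h a (m + n) = BL q h a m ++ BL q h (a + m) n := by
  have := List.range'_append (s := a) (m := m) (n := n) (step := 1)
  simp only [one_mul] at this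
  rw [BL, BL, BL, ← this, List.map_append, List.flatten_append]

lemma BL_congr {h h' : ℕ → Bool} (a M : ℕ) (H : ∀ k, a ≤ k → k < a + M → h k = h' k) :
    BL q h a M = BL q h' a M := by
  induction M generalizing a with
  | zero => rfl
  | succ M ih =>
    rw [BL_succ, BL_succ, H a (le_refl a) (by omega), ih (a+1) (fun k hk1 hk2 => H k (by omega) (by omega))]

lemma qlen (hq : ∀ n : ℕ, (q n true).length = (q n false).length) (k : ℕ) (i : Bool) :
    (q k i).length = (q k false).length := by cases i <;> simp [hq k]

lemma length_BL_indep (hq : ∀ n : ℕ, (q n true).length = (q n false).length)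
    (h h' : ℕ → Bool) (a M : ℕ) : (BL q h a M).length = (BL q h' a M).length := by
  induction M generalizing a with
  | zero => rfl
  | succ M ih =>
    rw [BL_succ, BL_succ]
    simp only [List.length_append, qlen hq a (h a), qlen hq a (h' a), ih (a+1)]

lemma B_succ (h : ℕ → Bool) (M : ℕ) :
    B r q h (M + 1) = B r q h M ++ q M (h M) := by
  rw [B, B, BL_add h 0 M 1]
  simp [BL_succ, BL_zero]

lemma length_B (hq : ∀ n : ℕ, (q n true).length = (q n false).length)
    (h : ℕ → Bool) (M : ℕ) : (B r q h M).length = splN r q M := by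
  induction M with
  | zero => simp [B, BL_zero, splN]
  | succ M ih => rw [B_succ, splN]; simp [ih, qlen hq M (h M)]

lemma B_prefix_B (h : ℕ → Bool) {n M : ℕ} (hnM : n ≤ M) : B r q h n <+: B r q h M := by
  have : M = n + (M - n) := by omega
  rw [this, B, B, BL_add h 0 n (M - n), ← List.append_assoc]
  exact List.prefix_append _ _

lemma splN_mono (hq1 : ∀ n : ℕ, 1 ≤ (q n false).length) : StrictMono (splN r q) := by
  apply strictMono_nat_of_lt_succ
  intro n
  have := hq1 n
  simp only [splN]; omega

lemma splN_ge (hq1 : ∀ n : ℕ, 1 ≤ (q n false).length) (n : ℕ) : n ≤ splN r q n := by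
  induction n with
  | zero => exact Nat.zero_le _
  | succ n ih => have := hq1 n; simp only [splN]; omega

lemma zip_BL (hq : ∀ n : ℕ, (q n true).length = (q n false).length)
    (f g : ℕ → Bool) (a n : ℕ) :
    List.zipWith Bool.xor (BL q f a n) (BL q g a n) = DL q f g a n := by
  induction n generalizing a with
  | zero => rfl
  | succ n ih =>
    rw [BL_succ, BL_succ, DL_succ,
      List.zipWith_append (by rw [qlen hq a (f a), qlen hq a (g a)]), ih (a+1)]

lemma length_DL (hq : ∀ n : ℕ, (q n true).length = (q n false).length)
    (f g h : ℕ → Bool) (a n : ℕ) : (DL q f g a n).length = (BL q h a n).length := by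
  rw [← zip_BL hq, List.length_zipWith, length_BL_indep hq f h a n, length_BL_indep hq g h a n,
    Nat.min_self]

lemma act_DL_BL (hq : ∀ n : ℕ, (q n true).length = (q n false).length)
    (f g h : ℕ → Bool) (a n : ℕ) :
    act (DL q f g a n) (BL q h a n)
      = BL q (fun k => Bool.xor (Bool.xor (f k) (g k)) (h k)) a n := by
  induction n generalizing a with
  | zero => rfl
  | succ n ih =>
    rw [BL_succ, DL_succ, BL_succ,
      act_append _ _ _ _ (by rw [List.length_zipWith, qlen hq a (f a), qlen hq a (g a),
        qlen hq a (h a), Nat.min_self]),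
      ih (a+1)]
    congr 1
    rw [block_eq (q a) (hq a) (f a) (g a) (h a) (Bool.xor (Bool.xor (f a) (g a)) (h a))
      (by cases f a <;> cases g a <;> cases h a <;> rfl)]
    exact act_zipWith_xor _ _ (by rw [qlen hq a (h a)]; exact (qlen hq a _).symm)

lemma act_D_B (hq : ∀ n : ℕ, (q n true).length = (q n false).length)
    (f g h : ℕ → Bool) {n M : ℕ} (hnM : n ≤ M) :
    act (List.zipWith Bool.xor (B r q f n) (B r q g n)) (B r q h M)
      = B r q (fun k => if k < n then Bool.xor (Bool.xor (f k) (g k)) (h k) else h k) M := by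
  have hM : M = n + (M - n) := by omega
  have h1 : B r q h M = r ++ (BL q h 0 n ++ BL q h n (M - n)) := by
    rw [B]
    nth_rewrite 1 [hM]
    rw [BL_add h 0 n (M - n), Nat.zero_add]
  have h2 : List.zipWith Bool.xor (B r q f n) (B r q g n)
      = List.zipWith Bool.xor r r ++ (DL q f g 0 n ++ []) := by
    rw [B, B, List.zipWith_append rfl, zip_BL hq, List.append_nil]
  have h3 : (List.zipWith Bool.xor r r).length = r.length := by
    rw [List.length_zipWith, Nat.min_self]
  have h4 : (DL q f g 0 n).length = (BL q h 0 n).length := length_DL hq f g h 0 n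
  rw [h1, h2, act_append _ _ _ _ h3, act_append _ _ _ _ h4,
    act_zipWith_xor r r rfl, act_nil, act_DL_BL hq f g h 0 n]
  conv_rhs => rw [B, hM, BL_add _ 0 n (M - n), Nat.zero_add]
  congr 1
  congr 1
  · exact BL_congr 0 n (fun k _ hk2 => by
      simp only [Nat.zero_add] at hk2
      simp [hk2])
  · exact BL_congr n (M - n) (fun k hk1 _ => by simp [Nat.not_lt.2 hk1])


lemma getD_act (s t : Str) (k : ℕ) (hk : k < t.length) :
    (act s t).getD k false = Bool.xor (s.getD k false) (t.getD k false) := by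
  rw [List.getD_eq_getElem _ _ (by rw [length_act]; exact hk), getElem_act s t k hk,
    List.getD_eq_getElem _ _ hk]

lemma getD_zip (u v : Str) (k : ℕ) (hk : k < u.length) (hk' : k < v.length) :
    (List.zipWith Bool.xor u v).getD k false = Bool.xor (u.getD k false) (v.getD k false) := by
  rw [List.getD_eq_getElem _ _ (by rw [List.length_zipWith]; omega), List.getElem_zipWith,
    List.getD_eq_getElem _ _ hk, List.getD_eq_getElem _ _ hk']

lemma take_of_prefix {u w : Str} (h : u <+: w) {m : ℕ} (hm : m ≤ u.length) :
    u.take m = w.take m := by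
  conv_lhs => rw [List.prefix_iff_eq_take.1 h]
  rw [List.take_take, Nat.min_eq_left hm]

lemma sigma_eq_D {σ u v : Str} (hact : act σ u = v) (hlen : σ.length ≤ u.length) (k : ℕ) :
    σ.getD k false = (List.zipWith Bool.xor u v).getD k false := by
  have hlv : v.length = u.length := by rw [← hact, length_act]
  by_cases hk : k < u.length
  · rw [getD_zip u v k hk (by omega)]
    have hv : v.getD k false = Bool.xor (σ.getD k false) (u.getD k false) := by
      rw [← hact, getD_act σ u k hk]
    rw [hv]
    cases σ.getD k false <;> cases u.getD k false <;> rfl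
  · rw [List.getD_eq_default _ _ (by omega),
      List.getD_eq_default _ _ (by rw [List.length_zipWith]; omega)]

lemma take_eq_B {q : ℕ → Bool → Str} {r : Str}
    (hq1 : ∀ k : ℕ, (q k true).length = (q k false).length)
    (hq2 : ∀ k : ℕ, 1 ≤ (q k false).length)
    {u : Str} {h : ℕ → Bool} {n m : ℕ}
    (hu : u <+: B r q h (m+1)) (hn : splN r q n ≤ u.length) :
    u.take (splN r q n) = B r q h n := by
  have hul : u.length ≤ splN r q (m+1) := by
    have := hu.length_le
    rwa [length_B hq1] at this
  have hnm : n ≤ m + 1 := (splN_mono (r := r) hq2).le_iff_le.1 (le_trans hn hul)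
  rw [take_of_prefix hu hn, ← length_B hq1 h n]
  exact (List.prefix_iff_eq_take.1 (B_prefix_B h hnm)).symm


/-- Lemma `trans`(ii): if `T` is an E0-large tree and `σ ∈ 2^{<ω}`,
then either `σ·T = T` or `T ∩ (σ·T)` is finite. -/
theorem stmt1 (T : Tr) (hT : IsLT T) (σ : Str) :
    actT σ T = T ∨ (T ∩ actT σ T).Finite := by
  obtain ⟨r, q, hq, hhead, hTeq⟩ := hT
  have hq1 : ∀ k : ℕ, (q k true).length = (q k false).length := fun k => (hq k).1
  have hq2 : ∀ k : ℕ, 1 ≤ (q k false).length := fun k => (hq k).2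
  have hBT : T = {t | ∃ m : ℕ, ∃ h : ℕ → Bool, t <+: B r q h (m+1)} := by
    rw [hTeq]
    simp only [B, BL, List.range_eq_range']
  set n := σ.length with hn
  have hσL : σ.length ≤ splN r q n := splN_ge hq2 n
  by_cases hcase : ∃ u, u ∈ T ∩ actT σ T ∧ splN r q n ≤ u.length
  · left
    obtain ⟨u, ⟨huT, w, hwT, hwu⟩, hun⟩ := hcase
    have hσuT : act σ u ∈ T := by rw [← hwu, act_act]; exact hwT
    rw [hBT] at huT hσuT
    obtain ⟨m1, h1, hu1⟩ := huT
    obtain ⟨m2, h2, hu2⟩ := hσuT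
    have hfn : u.take (splN r q n) = B r q h1 n := take_eq_B hq1 hq2 hu1 hun
    have hgn : (act σ u).take (splN r q n) = B r q h2 n :=
      take_eq_B hq1 hq2 hu2 (by rw [length_act]; exact hun)
    have hact : act σ (B r q h1 n) = B r q h2 n := by rw [← hfn, ← hgn, act_take]
    have hlenf : σ.length ≤ (B r q h1 n).length := by rw [length_B hq1]; exact hσL
    have hD : ∀ k, σ.getD k false
        = (List.zipWith Bool.xor (B r q h1 n) (B r q h2 n)).getD k false :=
      sigma_eq_D hact hlenf
    have hstep : ∀ t ∈ T, act σ t ∈ T := by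
      intro t ht
      rw [hBT] at ht ⊢
      obtain ⟨m, h, htp⟩ := ht
      set M := max (m+1) n with hM
      have hm1M : m + 1 ≤ M := le_max_left _ _
      have hnM : n ≤ M := le_max_right _ _
      have htp' : t <+: B r q h M := htp.trans (B_prefix_B h hm1M)
      have h5 : act σ t = act (List.zipWith Bool.xor (B r q h1 n) (B r q h2 n)) t :=
        act_congr _ _ _ (fun k _ => hD k)
      have h6 : act σ t <+:
          B r q (fun k => if k < n then Bool.xor (Bool.xor (h1 k) (h2 k)) (h k) else h k) M := by
        rw [h5, ← act_D_B (r := r) hq1 h1 h2 h hnM]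
        exact act_prefix _ _ _ htp'
      simp only [Set.mem_setOf_eq]
      refine ⟨M - 1, fun k => if k < n then Bool.xor (Bool.xor (h1 k) (h2 k)) (h k) else h k, ?_⟩
      have hMM : M - 1 + 1 = M := by omega
      rw [hMM]
      exact h6
    ext t
    constructor
    · rintro ⟨w', hw', rfl⟩
      exact hstep w' hw'
    · intro ht
      exact ⟨act σ t, hstep t ht, act_act σ t⟩
  · right
    apply Set.Finite.subset (List.finite_length_lt Bool (splN r q n))
    intro t ht
    by_contra hlen
    simp only [Set.mem_setOf_eq, not_lt] at hlen
    exact hcase ⟨t, ht, hlen⟩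

end E0L
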